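/- Let X ⊆ {0,1}^ℤ be an aperiodic Toeplitz subshift with single holes. Then X is a strong Toeplitz subshift of rank 2. -/

import Mathlib

namespace ToeplitzFR

open Set

variable {A B C : Type*}

/-- The shift map `S` on `ℤ → A`: `S(x)(i) = x(i+1)`. -/
def shift (x : ℤ → A) : ℤ → A := fun i => x (i + 1)

/-- The inverse shift map `S⁻¹`. -/
def shiftInv (x : ℤ → A) : ℤ → A := fun i => x (i - 1)

/-- The shift by `k`: `S^k`. -/
def shiftBy (k : ℤ) (x : ℤ → A) : ℤ → A := fun i => x (i + k)

/-- The finite word `x[i, i+n)`. -/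
def factorAt (x : ℤ → A) (i : ℤ) (n : ℕ) : List A :=
  (List.range n).map fun j => x (i + j)

/-- `x` is a periodic point of the shift. -/
def IsPeriodicPoint (x : ℤ → A) : Prop := ∃ p : ℕ, 0 < p ∧ ∀ i : ℤ, x (i + p) = x i

def IsAperiodicPoint (x : ℤ → A) : Prop := ¬ IsPeriodicPoint x

/-- `Per_p(x)`. -/
def PerSet (x : ℤ → A) (p : ℕ) : Set ℤ := {i : ℤ | ∀ k : ℤ, x (i + k * p) = x i}

/-- `Per(x) = ⋃_{p>1} Per_p(x)`. -/
def PerAll (x : ℤ → A) : Set ℤ := {i : ℤ | ∃ p : ℕ, 1 < p ∧ i ∈ PerSet x p}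

/-- `x` is a Toeplitz sequence. -/
def IsToeplitz (x : ℤ → A) : Prop := ∀ i : ℤ, ∃ p : ℕ, 1 < p ∧ i ∈ PerSet x p

/-- The shift orbit of `x`. -/
def orbit (x : ℤ → A) : Set (ℤ → A) := {y | ∃ k : ℤ, y = shiftBy k x}

/-- `X` is the Toeplitz subshift generated by the Toeplitz sequence `x`. -/
def ToeplitzGenerates [TopologicalSpace A] (x : ℤ → A) (X : Set (ℤ → A)) : Prop :=
  IsToeplitz x ∧ X = closure (orbit x)

/-- `X` is a Toeplitz subshift. -/
def IsToeplitzSubshift [TopologicalSpace A] (X : Set (ℤ → A)) : Prop :=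
  ∃ x : ℤ → A, ToeplitzGenerates x X

/-- The `p`-skeleton of `x`, with `none` as the blank symbol. -/
noncomputable def Skel (x : ℤ → A) (p : ℕ) : ℤ → Option A :=
  fun i => @ite _ (i ∈ PerSet x p) (Classical.dec _) (some (x i)) none

/-- `p` is an essential period of `x`. -/
def IsEssentialPeriod (x : ℤ → A) (p : ℕ) : Prop :=
  1 < p ∧ ∀ q : ℕ, 0 < q → q < p → ∃ i : ℤ, Skel x p (i + q) ≠ Skel x p i

/-- `(P n)` is a period structure for `x`. -/
def IsPeriodStructure (x : ℤ → A) (P : ℕ → ℕ) : Prop :=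
  StrictMono P ∧ (∀ n, IsEssentialPeriod x (P n)) ∧ (∀ n, P n ∣ P (n+1)) ∧
    ∀ i : ℤ, ∃ n, i ∈ PerSet x (P n)

/-- `q` divides the scale of the Toeplitz subshift `X`. -/
def DividesScale [TopologicalSpace A] (X : Set (ℤ → A)) (q : ℕ) : Prop :=
  ∃ (x : ℤ → A) (P : ℕ → ℕ),
    ToeplitzGenerates x X ∧ IsPeriodStructure x P ∧ ∃ n, q ∣ P n

/-! ### Directive sequences and S-adic subshifts -/

/-- All morphisms in the directive sequence are non-erasing. -/
def NonErasing {A : ℕ → Type*} (τ : ∀ n, A (n+1) → List (A n)) : Prop :=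
  ∀ n a, τ n a ≠ []

/-- The directive sequence has constant length. -/
def ConstantLength {A : ℕ → Type*} (τ : ∀ n, A (n+1) → List (A n)) : Prop :=
  ∀ n, ∀ a b : A (n+1), (τ n a).length = (τ n b).length

/-- The directive sequence is proper. -/
def ProperSeq {A : ℕ → Type*} (τ : ∀ n, A (n+1) → List (A n)) : Prop :=
  ∀ n, ∃ b c : A n, ∀ a : A (n+1), (τ n a).head? = some b ∧ (τ n a).getLast? = some c

/-- `sadicWordAux τ n k a = τ_{[n, n+k)}(a)`. -/
def sadicWordAux {A : ℕ → Type*} (τ : ∀ n, A (n+1) → List (A n)) (n : ℕ) :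
    ∀ k : ℕ, A (n + k) → List (A n)
  | 0, a => [a]
  | (k+1), a => (τ (n+k) a).flatMap (sadicWordAux τ n k)

/-- `word0 τ k a = τ_{[0, k)}(a)` for `a ∈ A k`. -/
def word0 {A : ℕ → Type*} (τ : ∀ n, A (n+1) → List (A n)) :
    ∀ k : ℕ, A k → List (A 0)
  | 0, a => [a]
  | (k+1), a => (τ k a).flatMap (word0 τ k)

/-- The directive sequence is primitive. -/
def PrimitiveSeq {A : ℕ → Type*} (τ : ∀ n, A (n+1) → List (A n)) : Prop :=
  ∀ n, ∃ k : ℕ, 0 < k ∧ ∀ (a : A (n+k)) (b : A n), b ∈ sadicWordAux τ n k a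

/-- The `n`-th level `X_τ^{(n)}` of the S-adic system generated by `τ`. -/
def XLevel {A : ℕ → Type*} (τ : ∀ n, A (n+1) → List (A n)) (n : ℕ) :
    Set (ℤ → A n) :=
  {y | ∀ (i : ℤ) (m : ℕ), ∃ k : ℕ, 0 < k ∧ ∃ a : A (n+k),
      (factorAt y i m).IsInfix (sadicWordAux τ n k a)}

/-- The alphabet rank (`liminf_n |A_n|`) is at most `K`. -/
def AlphabetRankLE (A : ℕ → Type*) [∀ n, Fintype (A n)] (K : ℕ) : Prop :=
  ∀ N : ℕ, ∃ n, N ≤ n ∧ Fintype.card (A n) ≤ K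

/-! ### Recognizability -/

/-- `z` is the bi-infinite concatenation `⋯σ(y(-1)).σ(y(0))σ(y(1))⋯`,
with `σ(y(0))` starting at coordinate `0`. -/
def IsConcat (σ : B → List C) (y : ℤ → B) (z : ℤ → C) : Prop :=
  ∃ c : ℤ → ℤ, c 0 = 0 ∧ (∀ j : ℤ, c (j + 1) = c j + (σ (y j)).length) ∧
    ∀ (j : ℤ) (m : Fin (σ (y j)).length), z (c j + (m : ℕ)) = (σ (y j)).get m

/-- `(y, k)` is a centered `σ`-representation of `x` in `Y`. -/
def IsCenteredRep (σ : B → List C) (Y : Set (ℤ → B)) (x : ℤ → C)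
    (y : ℤ → B) (k : ℕ) : Prop :=
  y ∈ Y ∧ k < (σ (y 0)).length ∧ IsConcat σ y (fun m => x (m - k))

/-- The morphism `σ` is recognizable in `Y`. -/
def RecognizableIn (σ : B → List C) (Y : Set (ℤ → B)) : Prop :=
  ∀ (x : ℤ → C) (y y' : ℤ → B) (k k' : ℕ),
    IsCenteredRep σ Y x y k → IsCenteredRep σ Y x y' k' → y = y' ∧ k = k'

/-- The directive sequence `τ` is recognizable. -/
def RecognizableSeq {A : ℕ → Type*} (τ : ∀ n, A (n+1) → List (A n)) : Prop :=
  ∀ n, RecognizableIn (τ n) (XLevel τ (n+1))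

/-! ### Conjugacy -/

/-- `(X, TX)` and `(Y, TY)` are conjugate via a homeomorphism. -/
def ConjugateBy [TopologicalSpace A] [TopologicalSpace B]
    (X : Set (ℤ → A)) (Y : Set (ℤ → B))
    (TX : (ℤ → A) → (ℤ → A)) (TY : (ℤ → B) → (ℤ → B)) : Prop :=
  ∃ φ : ↥X ≃ₜ ↥Y, ∀ (x : ℤ → A) (hx : x ∈ X) (hx' : TX x ∈ X),
    (φ ⟨TX x, hx'⟩).1 = TY (φ ⟨x, hx⟩).1

/-- `(X, S)` and `(Y, S)` are conjugate subshifts. -/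
def Conjugate [TopologicalSpace A] [TopologicalSpace B]
    (X : Set (ℤ → A)) (Y : Set (ℤ → B)) : Prop :=
  ConjugateBy X Y shift shift

/-- `X` is a strong Toeplitz subshift of rank `K`: it is conjugate to the S-adic subshift
of a constant-length, primitive, proper and recognizable directive sequence of
alphabet rank at most `K`. -/
def IsStrongToeplitzOfRank [TopologicalSpace A] (X : Set (ℤ → A)) (K : ℕ) : Prop :=
  ∃ (B : ℕ → Type) (iB : ∀ n, Fintype (B n)) (σ : ∀ n, B (n+1) → List (B n)),
    NonErasing σ ∧ ConstantLength σ ∧ PrimitiveSeq σ ∧ ProperSeq σ ∧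
    RecognizableSeq σ ∧ @AlphabetRankLE B iB K ∧
    @Conjugate A (B 0) _ ⊥ X (XLevel σ 0)

/-- `X` is conjugate to the S-adic subshift of a primitive, proper and recognizable
directive sequence of alphabet rank at most `K`. -/
def HasFiniteRankSAdicRep [TopologicalSpace A] (X : Set (ℤ → A)) (K : ℕ) : Prop :=
  ∃ (B : ℕ → Type) (iB : ∀ n, Fintype (B n)) (σ : ∀ n, B (n+1) → List (B n)),
    NonErasing σ ∧ PrimitiveSeq σ ∧ ProperSeq σ ∧
    RecognizableSeq σ ∧ @AlphabetRankLE B iB K ∧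
    @Conjugate A (B 0) _ ⊥ X (XLevel σ 0)

/-! ### Cuts, languages, built-from -/

/-- The set of words `{x[t+kp, t+(k+1)p) : k ∈ ℤ}`. -/
def cutWords (x : ℤ → A) (p t : ℕ) : Set (List A) :=
  {w | ∃ k : ℤ, w = factorAt x ((t : ℤ) + k * p) p}

/-- `(p, t)` is a strong rank-2 cut of `x`. -/
def StrongRank2Cut (x : ℤ → A) (p t : ℕ) : Prop :=
  t < p ∧ ∃ u v : List A, u ≠ v ∧ cutWords x p t = {u, v}

/-- The language `L_n(X)`. -/
def Lang (n : ℕ) (X : Set (ℤ → A)) : Set (List A) :=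
  {w | ∃ x ∈ X, ∃ i : ℤ, w = factorAt x i n}

/-- The maximal common prefix of `u` and `v` has length greater than `m`. -/
def CommonPrefixLongerThan (u v : List A) (m : ℕ) : Prop :=
  m + 1 ≤ u.length ∧ m + 1 ≤ v.length ∧ u.take (m+1) = v.take (m+1)

/-- The maximal common suffix of `u` and `v` has length greater than `m`. -/
def CommonSuffixLongerThan (u v : List A) (m : ℕ) : Prop :=
  CommonPrefixLongerThan u.reverse v.reverse m

/-- `b = (β₀, (α₁, …, α_k), β₁)` is a building of the word `w` from `W`:
`w = β₀α₁⋯α_kβ₁`, all `αᵢ ∈ W`, `β₀` is a proper suffix of an element of `W`,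
and `β₁` is a proper prefix of an element of `W`. -/
def IsBuilding (W : Set (List A)) (w : List A)
    (b : List A × List (List A) × List A) : Prop :=
  w = b.1 ++ b.2.1.flatten ++ b.2.2 ∧ (∀ α ∈ b.2.1, α ∈ W) ∧
  (∃ u ∈ W, b.1 <:+ u ∧ b.1 ≠ u) ∧ (∃ u ∈ W, b.2.2 <+: u ∧ b.2.2 ≠ u)

/-- `w` is uniquely built from `W`. -/
def UniquelyBuiltFrom (W : Set (List A)) (w : List A) : Prop :=
  ∃! b : List A × List (List A) × List A, IsBuilding W w b

/-- `X` together with one of its points satisfies the strong rank-2 cut property. -/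
def GoodCuts [TopologicalSpace A] (X : Set (ℤ → A)) (x : ℤ → A) : Prop :=
  ∀ p : ℕ, 0 < p → DividesScale X p → ∀ m : ℕ,
    ∃ q t : ℕ, StrongRank2Cut x q t ∧ p ∣ q ∧ DividesScale X q ∧
      ∃ u v : List A, u ≠ v ∧ cutWords x q t = {u, v} ∧
        CommonPrefixLongerThan u v m ∧ CommonSuffixLongerThan u v m

/-! ### Euclidean pairs and buildings of bi-infinite sequences -/

/-- `{u, v}` is a Euclidean pair. -/
def EuclideanPair (u v : List A) : Prop :=
  ∃ (w : List A) (k l : ℕ),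
    u = (List.replicate k w).flatten ∧ v = (List.replicate l w).flatten

/-- `α` is the distinguished prefix of `u` and `v`. -/
def IsDistinguishedPrefix (u v α : List A) : Prop :=
  α.length < u.length + v.length ∧
  ∀ x y : List A,
    (∃ l : List (List A), (∀ w ∈ l, w = u ∨ w = v) ∧ x = u ++ l.flatten) →
    (∃ l : List (List A), (∀ w ∈ l, w = u ∨ w = v) ∧ y = v ++ l.flatten) →
    α.length + 1 ≤ x.length → α.length + 1 ≤ y.length →
    α <+: x ∧ α <+: y ∧ x[α.length]? ≠ y[α.length]?

/-- `β` is the distinguished suffix of `u` and `v`. -/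
def IsDistinguishedSuffix (u v β : List A) : Prop :=
  IsDistinguishedPrefix u.reverse v.reverse β.reverse

/-- `(c, f)` is a building of the bi-infinite sequence `x` from `W`:
block `j` starts at position `c j` and carries the word `f j ∈ W`. -/
def IsBuildingSeq (W : Set (List A)) (x : ℤ → A) (c : ℤ → ℤ) (f : ℤ → List A) : Prop :=
  (∀ j : ℤ, f j ∈ W) ∧ (∀ j : ℤ, c (j + 1) = c j + (f j).length) ∧
  ∀ (j : ℤ) (m : Fin (f j).length), x (c j + (m : ℕ)) = (f j).get m

/-- The subshift `X_{u,v}` of all sequences built from `{u, v}`. -/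
def Xuv (u v : List A) : Set (ℤ → A) :=
  {x | ∃ (c : ℤ → ℤ) (f : ℤ → List A), IsBuildingSeq {u, v} x c f}

/-! ### Block-code conjugacies -/

/-- A conjugacy `φ : X → Y` admitting block width `2n+1`. -/
structure BlockConjugacy (A : Type*) (X Y : Set (ℤ → A)) (n : ℕ) where
  toFun : (ℤ → A) → (ℤ → A)
  invFun : (ℤ → A) → (ℤ → A)
  maps_to : ∀ x ∈ X, toFun x ∈ Y
  maps_from : ∀ y ∈ Y, invFun y ∈ X
  left_inv : ∀ x ∈ X, invFun (toFun x) = x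
  right_inv : ∀ y ∈ Y, toFun (invFun y) = y
  shift_comm : ∀ x ∈ X, toFun (shift x) = shift (toFun x)
  code : List A → A
  code_inv : List A → A
  code_spec : ∀ x ∈ X, ∀ i : ℤ, toFun x i = code (factorAt x (i - n) (2*n+1))
  code_inv_spec : ∀ y ∈ Y, ∀ i : ℤ, invFun y i = code_inv (factorAt y (i - n) (2*n+1))

/-! ### Parts, permutation action, χ -/

/-- `W` is a member of `Parts(X, p)`: a class of the common-`p`-skeleton relation. -/
def SkelClass (X : Set (ℤ → A)) (p : ℕ) (W : Set (ℤ → A)) : Prop :=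
  ∃ y ∈ X, W = {z ∈ X | Skel z p = Skel y p}

/-- The map `ψ̂` induced by a permutation `ψ` of `A^p`. -/
def permHat (p : ℕ) (ψ : Equiv.Perm (Fin p → A)) (x : ℤ → A) : ℤ → A :=
  fun i =>
    if h : (i.emod p).toNat < p then
      ψ (fun m : Fin p => x (i - i.emod p + (m : ℕ))) ⟨(i.emod p).toNat, h⟩
    else x i

/-- The relation `E_p` on compact subsets of `A^ℤ`. -/
def EpRel (p : ℕ) (K L : Set (ℤ → A)) : Prop :=
  ∃ ψ : Equiv.Perm (Fin p → A), L = permHat p ψ '' K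

/-- `W ∈ Parts_*(X, p)`. -/
def SkelClassStar (X : Set (ℤ → A)) (p : ℕ) (W : Set (ℤ → A)) : Prop :=
  SkelClass X p W ∧ ∀ y ∈ W, Skel y p (-1) = none ∧ Skel y p 0 ≠ none

/-- `length(W) = L` for `W ∈ Parts_*(X, p)`. -/
def HasLength (p : ℕ) (W : Set (ℤ → A)) (L : ℕ) : Prop :=
  ∀ y ∈ W, (∀ i : ℕ, i < L → Skel y p (i : ℤ) ≠ none) ∧ Skel y p (L : ℤ) = none

/-- `Z ∈ χ(X, p)`. -/
def ChiMem (X : Set (ℤ → A)) (p : ℕ) (Z : Set (ℤ → A)) : Prop :=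
  ∃ (W : Set (ℤ → A)) (L : ℕ), SkelClassStar X p W ∧ HasLength p W L ∧
    (∀ (W' : Set (ℤ → A)) (L' : ℕ),
      SkelClassStar X p W' → HasLength p W' L' → L' ≤ L) ∧
    Z = shiftBy ((L / 2 : ℕ) : ℤ) '' W

/-- `χ(X, p) E_p^fin χ(Y, p)`. -/
def ChiEpFin (X Y : Set (ℤ → A)) (p : ℕ) : Prop :=
  (∀ K, ChiMem X p K → ∃ L, ChiMem Y p L ∧ EpRel p K L) ∧
  (∀ L, ChiMem Y p L → ∃ K, ChiMem X p K ∧ EpRel p K L)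

/-! ### Single holes and fillings -/

/-- The Toeplitz sequence `x` has single holes with respect to the period structure `P`. -/
def SingleHoles (x : ℤ → A) (P : ℕ → ℕ) : Prop :=
  IsPeriodStructure x P ∧
  ∀ n, ∃! i : ℤ, 0 ≤ i ∧ i < (P n : ℤ) ∧ i ∉ PerSet x (P n)

/-- The Toeplitz subshift `X` has single holes. -/
def HasSingleHoles [TopologicalSpace A] (X : Set (ℤ → A)) : Prop :=
  ∃ (x : ℤ → A) (P : ℕ → ℕ), ToeplitzGenerates x X ∧ SingleHoles x P

/-- `w` is the `(n, m)`-filling of `x` (for periods `pn < pm`). -/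
def IsFilling (x : ℤ → A) (pn pm : ℕ) (w : List A) : Prop :=
  w.length = pm / pn - 1 ∧
  ∀ h : ℤ, 0 ≤ h → h < (pm : ℤ) → h ∉ PerSet x pm →
    ∀ (j : ℕ) (hj : j < w.length), w.get ⟨j, hj⟩ = x (h + (j+1) * pn)

/-- `u` is a `θ`-palindrome. -/
def ThetaPalindrome (θ : Equiv.Perm A) (u : List A) : Prop :=
  u.map (fun a => θ a) = u.reverse

/-! ### Nice symmetries -/

/-- `x` has nice symmetries with respect to `(p, q)`. -/
def NiceSymmetries (x : ℤ → A) (p q : ℕ) : Prop :=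
  ∃ m : ℤ, 1 < m ∧ m ≤ (q : ℤ) + 1 ∧
    (∀ k : ℕ, k < q / p →
      (Set.Ico ((k * p : ℕ) : ℤ) (((k+1) * p : ℕ) : ℤ) ⊆ PerSet x q ↔
       Set.Ico (m - ((k+1) * p : ℕ)) (m - (k * p : ℕ)) ⊆ PerSet x q)) ∧
    (∀ k k' : ℕ, k < q / p → k' < q / p →
      Set.Ico ((k * p : ℕ) : ℤ) (((k+1) * p : ℕ) : ℤ) ⊆ PerSet x q →
      Set.Ico ((k' * p : ℕ) : ℤ) (((k'+1) * p : ℕ) : ℤ) ⊆ PerSet x q →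
      (factorAt x ((k * p : ℕ) : ℤ) p = factorAt x ((k' * p : ℕ) : ℤ) p ↔
       factorAt x (m - ((k+1) * p : ℕ)) p = factorAt x (m - ((k'+1) * p : ℕ)) p))

/-- For some `p` dividing the scale of `X`, `x` has nice symmetries with respect to
`(p, q)` for all `q > p` with `p ∣ q` dividing the scale of `X`. -/
def NiceSymAll [TopologicalSpace A] (X : Set (ℤ → A)) (x : ℤ → A) : Prop :=
  ∃ p : ℕ, 0 < p ∧ DividesScale X p ∧
    ∀ q : ℕ, p < q → p ∣ q → DividesScale X q → NiceSymmetries x p q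

/-- A pair `(x, x')` is a centered left asymptotic pair. -/
def CenteredLeftAsymptoticPair (x x' : ℤ → A) : Prop :=
  (∀ i : ℤ, i < 0 → x i = x' i) ∧ x 0 ≠ x' 0

/-! ### Automorphism groups -/

/-- `e` is an automorphism of the subshift `(X, S)`. -/
def IsShiftAutomorphism [TopologicalSpace A] (X : Set (ℤ → A)) (e : ↥X ≃ₜ ↥X) : Prop :=
  ∀ (x : ℤ → A) (hx : x ∈ X) (hx' : shift x ∈ X),
    (e ⟨shift x, hx'⟩).1 = shift (e ⟨x, hx⟩).1

/-- The automorphism group of `(X, S)` is isomorphic, as a group, to `ℤ × ℤ/nℤ`. -/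
def AutGroupIsoZxZmod [TopologicalSpace A] (X : Set (ℤ → A)) (n : ℕ) : Prop :=
  ∃ Φ : {e : ↥X ≃ₜ ↥X // IsShiftAutomorphism X e} → ℤ × ZMod n,
    Function.Bijective Φ ∧
    ∀ e f g : {e : ↥X ≃ₜ ↥X // IsShiftAutomorphism X e},
      (∀ z : ↥X, g.1 z = e.1 (f.1 z)) → Φ g = Φ e + Φ f

/-! ### The Polish space of subshifts over `ℤ` -/

/-- A point of the space `𝐒` of all (compact, nonempty, shift-invariant) subshifts
over finite alphabets contained in `ℤ`. -/
structure SubshiftSpace : Type where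
  carrier : Set (ℤ → ℤ)
  nonempty : carrier.Nonempty
  compact : IsCompact carrier
  invariant : shift '' carrier = carrier

/-- The topology on `𝐒` induced by the languages `(L_n(X))_{n}`, with each
family of `n`-languages discrete; this coincides with the metric
`d(X,Y) = 2^{-min{n : L_n(X) ≠ L_n(Y)}}`. -/
instance : TopologicalSpace SubshiftSpace :=
  TopologicalSpace.induced
    (fun X : SubshiftSpace => (fun n => Lang n X.carrier : ℕ → Set (List ℤ)))
    (@Pi.topologicalSpace ℕ (fun _ => Set (List ℤ)) (fun _ => ⊥))

/-- The subset `𝐌 ⊆ 𝐒` of infinite minimal subshifts. -/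
def MinimalSet : Set SubshiftSpace :=
  {X | X.carrier.Infinite ∧ ∀ x ∈ X.carrier, X.carrier ⊆ closure (orbit x)}


/-! ### Auxiliary development for statement16 -/

section Dev

lemma factorAt_eq' {A : Type*} (x : ℤ → A) (i : ℤ) (n : ℕ) :
    factorAt x i n = (List.range n).map (fun j : ℕ => x (i + (j : ℤ))) := by
  simp [factorAt]
  rw [← List.map_eq_flatMap, List.map_map]
  rfl

@[simp] lemma length_factorAt {A : Type*} (x : ℤ → A) (i : ℤ) (n : ℕ) :
    (factorAt x i n).length = n := by
  rw [factorAt_eq']; simp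

lemma getElem_factorAt {A : Type*} (x : ℤ → A) (i : ℤ) (n : ℕ) (j : ℕ) (hj : j < n) :
    (factorAt x i n)[j]'(by simp [hj]) = x (i + j) := by
  simp [factorAt_eq']

lemma factorAt_append {A : Type*} (x : ℤ → A) (i : ℤ) (a b : ℕ) :
    factorAt x i a ++ factorAt x (i + a) b = factorAt x i (a + b) := by
  simp only [factorAt_eq']
  rw [List.range_add, List.map_append, List.map_map]
  congr 1
  apply List.map_congr_left
  intro j hj
  simp only [Function.comp_apply]
  congr 1
  push_cast
  ring

lemma factorAt_infix {A : Type*} (x : ℤ → A) (i : ℤ) (d m N : ℕ) (h : d + m ≤ N) :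
    factorAt x (i + d) m <:+: factorAt x i N := by
  refine ⟨factorAt x i d, factorAt x (i + d + m) (N - d - m), ?_⟩
  rw [factorAt_append]
  have : (i : ℤ) + d + m = i + (d + m : ℕ) := by push_cast; ring
  rw [this, factorAt_append]
  congr 1
  omega

lemma getElem_of_eq_append {A : Type*} {l w pre suf : List A} (h : pre ++ w ++ suf = l)
    (j : ℕ) (hj : j < w.length) (hl : pre.length + j < l.length) :
    l[pre.length + j] = w[j] := by
  subst h
  have h3 : pre.length + j < (pre ++ w).length := by simp; omega
  rw [List.getElem_append_left h3, List.getElem_append_right (by omega)]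
  congr 1
  omega

lemma infix_factorAt {A : Type*} {x : ℤ → A} {w : List A} {i : ℤ} {N : ℕ}
    (h : w <:+: factorAt x i N) : ∃ d : ℕ, w = factorAt x (i + d) w.length := by
  obtain ⟨pre, suf, hps⟩ := h
  refine ⟨pre.length, ?_⟩
  have hlen : pre.length + w.length + suf.length = N := by
    have := congrArg List.length hps
    simp at this
    omega
  apply List.ext_getElem (by simp)
  intro j hj hj'
  have h1 : pre.length + j < (factorAt x i N).length := by simp; omega
  have h2 := getElem_of_eq_append hps j hj h1
  rw [getElem_factorAt x i N _ (by omega)] at h2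
  rw [getElem_factorAt x _ _ _ (by omega), ← h2]
  congr 1
  push_cast
  ring

lemma factorAt_shiftBy {A : Type*} (x : ℤ → A) (k i : ℤ) (n : ℕ) :
    factorAt (shiftBy k x) i n = factorAt x (i + k) n := by
  simp only [factorAt_eq']
  apply List.map_congr_left
  intro j _
  show x (i + j + k) = x (i + k + j)
  congr 1
  ring

lemma perSet_eval {A : Type*} {x : ℤ → A} {p : ℕ} {i : ℤ} (h : i ∈ PerSet x p) {d : ℤ}
    (hd : (p:ℤ) ∣ d) : x (i + d) = x i := by
  obtain ⟨k, rfl⟩ := hd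
  have := h k
  rw [mul_comm] at this
  exact this

lemma perSet_shift {A : Type*} {x : ℤ → A} {p : ℕ} {i : ℤ} (d : ℤ) (hd : (p:ℤ) ∣ d)
    (h : i ∈ PerSet x p) : i + d ∈ PerSet x p := by
  intro k
  obtain ⟨c, rfl⟩ := hd
  have h1 := h (c + k)
  have h2 := h c
  have e1 : i + ↑p * c + k * ↑p = i + (c + k) * ↑p := by ring
  have e2 : i + ↑p * c = i + c * ↑p := by ring
  rw [e1, e2, h1, h2]

lemma perSet_mono {A : Type*} {x : ℤ → A} {p p' : ℕ} (h : p ∣ p') :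
    PerSet x p ⊆ PerSet x p' := by
  intro i hi k
  obtain ⟨c, rfl⟩ := h
  have := hi (k * c)
  rw [← this]
  congr 2
  push_cast
  ring

lemma not_dvd_of_small {q v : ℤ} (hq : 0 < q) (h1 : -q < v) (h2 : v < q) (h3 : v ≠ 0) :
    ¬ q ∣ v := by
  rintro ⟨k, rfl⟩
  rcases lt_trichotomy k 0 with hk|hk|hk
  · have := mul_le_mul_of_nonneg_left (show k ≤ -1 by omega) hq.le
    simp only [mul_neg, mul_one] at this
    linarith
  · simp [hk] at h3
  · have := mul_le_mul_of_nonneg_left (show 1 ≤ k by omega) hq.le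
    simp only [mul_one] at this
    linarith

/-- The data extracted from a single-hole Toeplitz sequence. -/
structure StData where
  x : ℤ → Bool
  q : ℕ → ℕ
  hh : ℕ → ℤ
  q0 : q 0 = 1
  qdvd : ∀ n, q n ∣ q (n+1)
  qratio : ∀ n, 3 * q n ≤ q (n+1)
  per : ∀ n i, ¬((q n : ℤ) ∣ (i - hh n)) → i ∈ PerSet x (q n)
  hmod : ∀ n, (q n : ℤ) ∣ (hh (n+1) - hh n)
  cover : ∀ i : ℤ, ∃ n, i ∈ PerSet x (q n)
  nonc : ∀ n, ∃ c d : ℤ, (q n : ℤ) ∣ (c - hh n) ∧ (q n : ℤ) ∣ (d - hh n) ∧ x c ≠ x d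

namespace StData

variable (S : StData)

lemma qpos : ∀ n, 0 < S.q n := by
  intro n
  induction n with
  | zero => rw [S.q0]; norm_num
  | succ m ih => have := S.qratio m; omega

lemma qlt (n : ℕ) : S.q n < S.q (n+1) := by
  have := S.qratio n
  have := S.qpos n
  omega

lemma qmono : StrictMono S.q := strictMono_nat_of_lt_succ S.qlt

lemma qdvd_le {n m : ℕ} (h : n ≤ m) : S.q n ∣ S.q m := by
  induction m with
  | zero => rw [Nat.le_zero] at h; rw [h]
  | succ k ih =>
      rcases Nat.lt_or_ge n (k+1) with h'|h'
      · exact dvd_trans (ih (by omega)) (S.qdvd k)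
      · have : n = k+1 := by omega
        rw [this]

/-- partial sums of the `q`'s; `s n` is the position of the hole inside a level-`n` block. -/
def s : ℕ → ℤ
  | 0 => 0
  | (n+1) => s n + S.q n

lemma s_nonneg (n : ℕ) : 0 ≤ S.s n := by
  induction n with
  | zero => simp [s]
  | succ m ih => have := S.qpos m; unfold s; positivity

lemma s_lt (n : ℕ) : S.s n < S.q n := by
  induction n with
  | zero => show (0:ℤ) < S.q 0; rw [S.q0]; norm_num
  | succ m ih =>
      show S.s m + S.q m < (S.q (m+1) : ℤ)
      have h3 := S.qratio m
      have : (3 * S.q m : ℤ) ≤ S.q (m+1) := by exact_mod_cast h3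
      have := S.qpos m
      have : (0:ℤ) < S.q m := by exact_mod_cast this
      linarith

lemma s_succ (n : ℕ) : S.s (n+1) = S.s n + S.q n := rfl

lemma s_sub_dvd {n m : ℕ} (h : n ≤ m) : (S.q n : ℤ) ∣ (S.s m - S.s n) := by
  induction m with
  | zero => rw [Nat.le_zero] at h; rw [h]; simp
  | succ k ih =>
      rcases Nat.lt_or_ge n (k+1) with h'|h'
      · have h1 := ih (by omega)
        have h2 : (S.q n : ℤ) ∣ S.q k := by exact_mod_cast S.qdvd_le (by omega : n ≤ k)
        have : S.s (k+1) - S.s n = (S.s k - S.s n) + S.q k := by rw [s_succ]; ring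
        rw [this]
        exact dvd_add h1 h2
      · have : n = k+1 := by omega
        rw [this]; simp

lemma hh_sub_dvd {n m : ℕ} (h : n ≤ m) : (S.q n : ℤ) ∣ (S.hh m - S.hh n) := by
  induction m with
  | zero => rw [Nat.le_zero] at h; rw [h]; simp
  | succ k ih =>
      rcases Nat.lt_or_ge n (k+1) with h'|h'
      · have h1 := ih (by omega)
        have h2 : (S.q n : ℤ) ∣ (S.hh (k+1) - S.hh k) := by
          exact dvd_trans (by exact_mod_cast S.qdvd_le (by omega : n ≤ k)) (S.hmod k)
        have : S.hh (k+1) - S.hh n = (S.hh k - S.hh n) + (S.hh (k+1) - S.hh k) := by ring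
        rw [this]
        exact dvd_add h1 h2
      · have : n = k+1 := by omega
        rw [this]; simp

/-- the cut position of level `n`. -/
def t (n : ℕ) : ℤ := S.hh n - S.s n

lemma t_sub_dvd {n m : ℕ} (h : n ≤ m) : (S.q n : ℤ) ∣ (S.t m - S.t n) := by
  have : S.t m - S.t n = (S.hh m - S.hh n) - (S.s m - S.s n) := by unfold t; ring
  rw [this]
  exact dvd_sub (S.hh_sub_dvd h) (S.s_sub_dvd h)

/-- number of level-`n` blocks in a level-`m` block. -/
def Bk (n m : ℕ) : ℕ := S.q m / S.q n

lemma Bk_mul {n m : ℕ} (h : n ≤ m) : S.Bk n m * S.q n = S.q m :=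
  Nat.div_mul_cancel (S.qdvd_le h)

lemma Bk_mul' {n m : ℕ} (h : n ≤ m) : (S.Bk n m : ℤ) * S.q n = S.q m := by
  exact_mod_cast congrArg (Nat.cast : ℕ → ℤ) (S.Bk_mul h)

lemma Bk_pos {n m : ℕ} (h : n ≤ m) : 0 < S.Bk n m := by
  have := S.Bk_mul h
  have := S.qpos m
  have := S.qpos n
  by_contra h'
  push_neg at h'
  interval_cases (S.Bk n m)
  omega


/-! ### The words and the substitution -/

/-- label of the `j`-th level-`n` block inside a level-`m` block whose hole is filled by `a`. -/
def lab (n m : ℕ) (a : Bool) (j : ℕ) : Bool :=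
  if (j : ℤ) * S.q n + S.s n = S.s m then a else S.x (S.t m + j * S.q n + S.s n)

/-- the level-`m` block (as a word over level-`n` letters) with hole filled by `a`. -/
def W (n m : ℕ) (a : Bool) : List Bool := (List.range (S.Bk n m)).map (S.lab n m a)

@[simp] lemma length_W (n m : ℕ) (a : Bool) : (S.W n m a).length = S.Bk n m := by
  simp [W]

lemma getElem_W (n m : ℕ) (a : Bool) (j : ℕ) (hj : j < S.Bk n m) :
    (S.W n m a)[j]'(by simp [hj]) = S.lab n m a j := by
  simp [W]

/-- the substitution at level `n`. -/
def sub (n : ℕ) : Bool → List Bool := fun b => S.W n (n+1) b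

lemma W_self (n : ℕ) (a : Bool) : S.W n n a = [a] := by
  have hB : S.Bk n n = 1 := by
    unfold Bk
    exact Nat.div_self (S.qpos n)
  unfold W
  rw [hB]
  show [S.lab n n a 0] = [a]
  congr 1
  unfold lab
  rw [if_pos (by push_cast; ring)]

lemma U_lt {n m : ℕ} (h : n ≤ m) {j : ℕ} (hj : j < S.Bk n m) :
    (j : ℤ) * S.q n + S.s n < S.q m := by
  have h1 : (j : ℤ) ≤ (S.Bk n m : ℤ) - 1 := by
    have : (j:ℤ) < S.Bk n m := by exact_mod_cast hj
    omega
  have hq : (0:ℤ) ≤ S.q n := by positivity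
  have h2 : (j:ℤ) * S.q n ≤ ((S.Bk n m : ℤ) - 1) * S.q n := mul_le_mul_of_nonneg_right h1 hq
  have h3 : ((S.Bk n m : ℤ) - 1) * S.q n = S.q m - S.q n := by
    rw [sub_mul, S.Bk_mul' h]; ring
  have h4 := S.s_lt n
  linarith

lemma U_nonneg (n : ℕ) (j : ℕ) : (0:ℤ) ≤ (j : ℤ) * S.q n + S.s n := by
  have := S.s_nonneg n
  have : (0:ℤ) ≤ (j:ℤ) * S.q n := by positivity
  linarith

/-- a position inside a level-`m` block which is not the hole is `q m`-periodic. -/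
lemma pos_mem_per {n m : ℕ} (h : n ≤ m) {j : ℕ} (hj : j < S.Bk n m)
    (hne : (j : ℤ) * S.q n + S.s n ≠ S.s m) :
    S.t m + j * S.q n + S.s n ∈ PerSet S.x (S.q m) := by
  apply S.per
  apply not_dvd_of_small (by exact_mod_cast S.qpos m)
  · have := S.U_nonneg n j
    have := S.s_lt m
    have : S.t m + ↑j * ↑(S.q n) + S.s n - S.hh m = (↑j * ↑(S.q n) + S.s n) - S.s m := by
      unfold t; ring
    rw [this]
    have := S.s_lt m
    linarith
  · have := S.U_lt h hj
    have := S.s_nonneg m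
    have e : S.t m + ↑j * ↑(S.q n) + S.s n - S.hh m = (↑j * ↑(S.q n) + S.s n) - S.s m := by
      unfold t; ring
    rw [e]
    linarith
  · intro h0
    apply hne
    have e : S.t m + ↑j * ↑(S.q n) + S.s n - S.hh m = (↑j * ↑(S.q n) + S.s n) - S.s m := by
      unfold t; ring
    rw [e] at h0
    linarith

/-- condition splitting for the composed hole. -/
lemma cond_split {n m : ℕ} (h : n ≤ m) {i j : ℕ} (hj : j < S.Bk n m) :
    ((i:ℤ) * S.q m + ((j:ℤ) * S.q n + S.s n) = S.s (m+1)) ↔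
      ((j:ℤ) * S.q n + S.s n = S.s m ∧ i = 1) := by
  have hU1 := S.U_nonneg n j
  have hU2 := S.U_lt h hj
  have hs1 := S.s_nonneg m
  have hs2 := S.s_lt m
  have hqm : (0:ℤ) < S.q m := by exact_mod_cast S.qpos m
  rw [S.s_succ]
  constructor
  · intro he
    have hi1 : (1:ℤ) ≤ i := by
      by_contra h'
      push_neg at h'
      have : (i:ℤ) = 0 := by
        have : (0:ℤ) ≤ i := by positivity
        omega
      rw [this] at he
      linarith
    have hi2 : (i:ℤ) ≤ 1 := by
      by_contra h'
      push_neg at h'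
      have h2' : (2:ℤ) ≤ i := by omega
      have := mul_le_mul_of_nonneg_right h2' hqm.le
      linarith
    have hi : (i:ℤ) = 1 := le_antisymm hi2 hi1
    constructor
    · rw [hi] at he; linarith
    · exact_mod_cast hi
  · rintro ⟨h1, h2⟩
    rw [h1, h2]
    push_cast
    ring

/-- main flattening helper. -/
lemma flatten_helper (Aa Bb : ℕ) (F : ℕ → Bool) (G : Bool → List Bool) (f : ℕ → Bool)
    (hlen : ∀ i < Aa, G (F i) = (List.range Bb).map (fun j => f (i * Bb + j))) :
    ((List.range Aa).map F).flatMap G = (List.range (Aa * Bb)).map f := by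
  induction Aa with
  | zero => simp
  | succ A ih =>
      rw [List.range_succ, List.map_append, List.flatMap_append,
        ih (fun i hi => hlen i (by omega))]
      have : (A+1) * Bb = A * Bb + Bb := by ring
      rw [this, List.range_add, List.map_append]
      congr 1
      simp only [List.map_cons, List.map_nil, List.flatMap_cons, List.flatMap_nil,
        List.append_nil]
      rw [hlen A (by omega), List.map_map]
      rfl

/-- the key composition identity. -/
lemma W_comp {n m : ℕ} (h : n ≤ m) (a : Bool) :
    (S.W m (m+1) a).flatMap (S.W n m) = S.W n (m+1) a := by
  have hBB : S.Bk n (m+1) = S.Bk m (m+1) * S.Bk n m := by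
    have h1 := S.Bk_mul h
    have h2 := S.Bk_mul (by omega : m ≤ m+1)
    have h3 := S.Bk_mul (by omega : n ≤ m+1)
    have hq := S.qpos n
    apply Nat.eq_of_mul_eq_mul_right hq
    rw [h3, mul_assoc, h1, h2]
  unfold W
  rw [hBB]
  apply flatten_helper
  intro i hi
  apply List.map_congr_left
  intro j hjmem
  have hj : j < S.Bk n m := List.mem_range.mp hjmem
  have hcast : ((i * S.Bk n m + j : ℕ) : ℤ) * S.q n + S.s n =
      (i:ℤ) * S.q m + ((j:ℤ) * S.q n + S.s n) := by
    push_cast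
    rw [add_mul, mul_assoc, S.Bk_mul' h]
    ring
  have hssucc : S.s (m+1) = S.s m + S.q m := S.s_succ m
  by_cases hjh : (j:ℤ) * S.q n + S.s n = S.s m
  · by_cases hih : i = 1
    · -- the composed hole
      unfold lab
      rw [if_pos hjh,
        if_pos (show (i:ℤ) * S.q m + S.s m = S.s (m+1) by
          rw [hih, hssucc]; push_cast; ring),
        if_pos (show ((i * S.Bk n m + j : ℕ):ℤ) * S.q n + S.s n = S.s (m+1) by
          rw [hcast, hjh, hih, hssucc]; push_cast; ring)]
    · -- sub-hole filled by the label of block `i`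
      have hine : ¬ ((i:ℤ) * S.q m + S.s m = S.s (m+1)) := by
        intro hc
        apply hih
        rw [hssucc] at hc
        have hqm : (0:ℤ) < S.q m := by exact_mod_cast S.qpos m
        have : (i:ℤ) = 1 := by
          have h0 : (i:ℤ) * S.q m = S.q m := by linarith
          have h1 : ((i:ℤ) - 1) * S.q m = 0 := by linear_combination h0
          rcases mul_eq_zero.mp h1 with h2|h2
          · linarith
          · exfalso; linarith
        exact_mod_cast this
      unfold lab
      rw [if_pos hjh, if_neg hine,
        if_neg (show ¬ (((i * S.Bk n m + j : ℕ):ℤ) * S.q n + S.s n = S.s (m+1)) by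
          rw [hcast]
          intro hc
          exact hih ((S.cond_split h hj).mp hc).2)]
      congr 1
      linarith [hcast]
  · -- `j` is not the sub-hole: use periodicity
    unfold lab
    rw [if_neg hjh,
      if_neg (show ¬ (((i * S.Bk n m + j : ℕ):ℤ) * S.q n + S.s n = S.s (m+1)) by
        rw [hcast]
        intro hc
        exact hjh ((S.cond_split h hj).mp hc).1)]
    have hper := S.pos_mem_per h hj hjh
    have hdvd : (S.q m : ℤ) ∣ ((S.t (m+1) - S.t m) + i * S.q m) :=
      dvd_add (S.t_sub_dvd (by omega : m ≤ m+1)) ⟨i, by ring⟩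
    have hev := (perSet_eval hper hdvd).symm
    convert hev using 2
    linarith [hcast]

/-! ### sadic identity and block structure -/

/-- the directive sequence. -/
def tau : ∀ n : ℕ, (fun _ : ℕ => Bool) (n+1) → List ((fun _ : ℕ => Bool) n) :=
  fun n => S.sub n

lemma sadic_eq : ∀ (k n : ℕ) (a : Bool), sadicWordAux (A := fun _ : ℕ => Bool) S.tau n k a = S.W n (n+k) a := by
  intro k
  induction k with
  | zero => intro n a; exact (S.W_self n a).symm
  | succ k ih =>
      intro n a
      show (S.tau (n+k) a).flatMap (sadicWordAux (A := fun _ : ℕ => Bool) S.tau n k) = _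
      have : sadicWordAux (A := fun _ : ℕ => Bool) S.tau n k = S.W n (n+k) := funext (ih n)
      rw [this]
      exact S.W_comp (by omega) a

/-- length of the substitution words. -/
lemma length_sub (n : ℕ) (b : Bool) : (S.sub n b).length = S.Bk n (n+1) := by
  simp [sub]

lemma Bk_ge_three (n : ℕ) : 3 ≤ S.Bk n (n+1) := by
  have h := S.qratio n
  have := S.qpos n
  rw [Bk, Nat.le_div_iff_mul_le (S.qpos n)]
  omega

lemma le_q_self (n : ℕ) : n + 1 ≤ S.q n := by
  induction n with
  | zero => rw [S.q0]
  | succ m ih => have := S.qratio m; omega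

/-- level-`n` blocks of `x` all equal `W 0 n` with suitable filling. -/
lemma block_eq (n : ℕ) (k : ℤ) :
    factorAt S.x (S.t n + k * S.q n) (S.q n) =
      S.W 0 n (S.x (S.t n + k * S.q n + S.s n)) := by
  have hB0 : S.Bk 0 n = S.q n := by
    rw [Bk, S.q0, Nat.div_one]
  have hq0 : (S.q 0 : ℤ) = 1 := by rw [S.q0]; norm_num
  have hs0 : S.s 0 = 0 := rfl
  rw [factorAt_eq', W, hB0]
  apply List.map_congr_left
  intro j hjmem
  have hj : j < S.q n := List.mem_range.mp hjmem
  rw [lab, hq0, hs0]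
  simp only [mul_one, add_zero]
  have ht : S.t n + (j:ℤ) - S.hh n = (j:ℤ) - S.s n := by rw [t]; ring
  by_cases hjs : (j:ℤ) = S.s n
  · rw [if_pos hjs, hjs]
  · rw [if_neg hjs]
    have hper : S.t n + (j:ℤ) ∈ PerSet S.x (S.q n) := by
      apply S.per
      apply not_dvd_of_small (by exact_mod_cast S.qpos n)
      · rw [ht]
        have : (0:ℤ) ≤ (j:ℤ) := by positivity
        linarith [S.s_lt n]
      · rw [ht]
        have : (j:ℤ) < S.q n := by exact_mod_cast hj
        linarith [S.s_nonneg n]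
      · intro hc
        rw [ht] at hc
        apply hjs
        linarith
    have hev := perSet_eval hper (⟨k, by ring⟩ : (S.q n : ℤ) ∣ k * S.q n)
    convert hev using 2
    ring

/-- the window anti-constancy lemma. -/
lemma window_not_const (n : ℕ) (b : Bool) :
    ∃ G : ℕ, 0 < G ∧ ∀ (m' : ℕ) (a : Bool) (o : ℕ), o + G ≤ S.Bk n m' →
      ∃ j : ℕ, o ≤ j ∧ j < o + G ∧ S.lab n m' a j = !b := by
  classical
  obtain ⟨c, d, hc, hd, hcd⟩ := S.nonc n
  obtain ⟨cc, hccd, hccv⟩ : ∃ cc : ℤ, ((S.q n : ℤ) ∣ (cc - S.hh n)) ∧ S.x cc = !b := by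
    by_cases h1 : S.x c = !b
    · exact ⟨c, hc, h1⟩
    · refine ⟨d, hd, ?_⟩
      cases hb : S.x c <;> cases hb' : S.x d <;> cases b <;> simp_all
  obtain ⟨M0, hM0⟩ := S.cover cc
  set M := max M0 n with hM
  have hccM : cc ∈ PerSet S.x (S.q M) := perSet_mono (S.qdvd_le (le_max_left _ _)) hM0
  have hnM : n ≤ M := le_max_right _ _
  set D := S.Bk n M with hD
  have hDq : (D : ℤ) * S.q n = S.q M := S.Bk_mul' hnM
  have hDpos : 0 < D := S.Bk_pos hnM
  refine ⟨2 * D + 1, by omega, ?_⟩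
  intro m' a o ho
  have hnm' : n ≤ m' := by
    by_contra hcon
    push_neg at hcon
    have : S.Bk n m' = 0 := by
      rw [Bk]
      exact Nat.div_eq_of_lt (S.qmono hcon)
    omega
  have hBm' : S.Bk n m' * S.q n = S.q m' := S.Bk_mul hnm'
  have hqm' : S.q M < S.q m' := by
    have h2 : (2 * D + 1) * S.q n ≤ S.Bk n m' * S.q n := Nat.mul_le_mul_right _ (by omega)
    have h3 : (D:ℕ) * S.q n = S.q M := by exact_mod_cast hDq
    have h4 : (2*D+1) * S.q n = 2*(D * S.q n) + S.q n := by ring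
    have := S.qpos n
    omega
  have hMm' : M ≤ m' := by
    by_contra hcon
    push_neg at hcon
    have := S.qmono hcon
    omega
  have hdvdE : (S.q n : ℤ) ∣ (cc - S.t m' - S.s n) := by
    have e1 : cc - S.t m' - S.s n =
        (cc - S.hh n) - (S.t m' - S.t n) + (S.hh n - S.t n - S.s n) := by ring
    have e2 : S.hh n - S.t n - S.s n = 0 := by rw [t]; ring
    rw [e1, e2, add_zero]
    exact dvd_sub hccd (S.t_sub_dvd hnm')
  obtain ⟨E, hE⟩ := hdvdE
  have hDz : (0:ℤ) < D := by exact_mod_cast hDpos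
  set r := (E - o) % (D:ℤ) with hr
  have hr0 : 0 ≤ r := Int.emod_nonneg _ (by omega)
  have hrD : r < D := Int.emod_lt_of_pos _ hDz
  set j1 : ℕ := o + r.toNat with hj1
  have hj1cast : (j1:ℤ) = o + r := by
    rw [hj1]
    push_cast [Int.toNat_of_nonneg hr0]
    ring
  have hj1div : (D:ℤ) ∣ ((j1:ℤ) - E) := by
    rw [hj1cast]
    refine ⟨-((E - (o:ℤ))/D), ?_⟩
    have h4 := Int.mul_ediv_add_emod (E - o) D
    rw [← hr] at h4
    linarith
  have hpick : ∃ j : ℕ, o ≤ j ∧ j < o + (2*D+1) ∧ (D:ℤ) ∣ ((j:ℤ) - E) ∧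
      ((j:ℤ) * S.q n + S.s n ≠ S.s m') := by
    have hj1b : o ≤ j1 ∧ j1 < o + D := by
      constructor
      · omega
      · have : r.toNat < D := by omega
        omega
    by_cases hhole : (j1:ℤ) * S.q n + S.s n = S.s m'
    · refine ⟨j1 + D, by omega, by omega, ?_, ?_⟩
      · have : ((j1 + D : ℕ):ℤ) - E = ((j1:ℤ) - E) + D := by push_cast; ring
        rw [this]
        exact dvd_add hj1div ⟨1, by ring⟩
      · intro hcon
        have hq : (0:ℤ) < S.q n := by exact_mod_cast S.qpos n
        have : ((j1 + D : ℕ):ℤ) * S.q n = (j1:ℤ) * S.q n := by linarith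
        have h5 : ((j1 + D:ℕ):ℤ) = (j1:ℤ) := by
          exact mul_right_cancel₀ (by positivity) this
        have : (D:ℤ) = 0 := by push_cast at h5; linarith
        omega
    · exact ⟨j1, hj1b.1, by omega, hj1div, hhole⟩
  obtain ⟨j, hjo, hjlt, hjdiv, hjne⟩ := hpick
  refine ⟨j, hjo, hjlt, ?_⟩
  rw [lab, if_neg hjne, ← hccv]
  have hdd : (S.q M:ℤ) ∣ ((S.t m' + j * S.q n + S.s n) - cc) := by
    obtain ⟨w, hw⟩ := hjdiv
    refine ⟨w, ?_⟩
    have e3 : S.t m' + (j:ℤ) * S.q n + S.s n - cc = ((j:ℤ) - E) * S.q n := by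
      have : cc = S.t m' + S.s n + S.q n * E := by linarith [hE]
      rw [this]
      ring
    rw [e3, hw, ← hDq]
    ring
  have hev := perSet_eval hccM hdd
  have e4 : cc + (S.t m' + (j:ℤ) * S.q n + S.s n - cc) = S.t m' + (j:ℤ) * S.q n + S.s n := by
    ring
  rw [e4] at hev
  exact hev

/-! ### properties of the directive sequence -/

lemma sub_head (n : ℕ) (a : Bool) :
    (S.sub n a).head? = some (S.x (S.t (n+1) + S.s n)) := by
  obtain ⟨K, hK⟩ : ∃ K, S.Bk n (n+1) = K + 1 := by
    have := S.Bk_ge_three n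
    exact ⟨S.Bk n (n+1) - 1, by omega⟩
  rw [sub, W, hK, List.range_succ_eq_map, List.map_cons, List.head?_cons]
  congr 1
  rw [lab, if_neg]
  · push_cast; ring_nf
  · rw [S.s_succ]
    push_cast
    intro hcon
    have := S.qpos n
    have : (0:ℤ) < S.q n := by exact_mod_cast this
    linarith

lemma sub_last (n : ℕ) (a : Bool) :
    (S.sub n a).getLast? = some (S.lab n (n+1) a (S.Bk n (n+1) - 1)) := by
  have hB := S.Bk_ge_three n
  rw [sub, W, List.getLast?_eq_getElem?]
  simp only [List.length_map, List.length_range]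
  rw [List.getElem?_map, List.getElem?_range (by omega)]
  rfl

lemma lab_last (n : ℕ) (a : Bool) :
    S.lab n (n+1) a (S.Bk n (n+1) - 1) =
      S.x (S.t (n+1) + (S.Bk n (n+1) - 1 : ℕ) * S.q n + S.s n) := by
  have hB := S.Bk_ge_three n
  rw [lab, if_neg]
  rw [S.s_succ]
  intro hcon
  have hq : (0:ℤ) < S.q n := by exact_mod_cast S.qpos n
  have h1 : ((S.Bk n (n+1) - 1 : ℕ) : ℤ) * S.q n = 1 * S.q n := by linarith
  have h2 : ((S.Bk n (n+1) - 1 : ℕ) : ℤ) = 1 := mul_right_cancel₀ (by positivity) h1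
  have : (S.Bk n (n+1) - 1 : ℕ) = 1 := by exact_mod_cast h2
  omega

lemma nonerasing : NonErasing (A := fun _ : ℕ => Bool) S.tau := by
  intro n a
  have h1 : (S.tau n a).length = S.Bk n (n+1) := S.length_sub n a
  have := S.Bk_ge_three n
  intro hcon
  rw [hcon] at h1
  simp at h1
  omega

lemma constlen : ConstantLength (A := fun _ : ℕ => Bool) S.tau := by
  intro n a b
  show (S.sub n a).length = (S.sub n b).length
  rw [S.length_sub, S.length_sub]

lemma proper : ProperSeq (A := fun _ : ℕ => Bool) S.tau := by
  intro n
  refine ⟨S.x (S.t (n+1) + S.s n), S.lab n (n+1) true (S.Bk n (n+1) - 1), ?_⟩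
  intro a
  constructor
  · exact S.sub_head n a
  · show (S.sub n a).getLast? = _
    rw [S.sub_last n a, S.lab_last n a, S.lab_last n true]

/-- both letters appear in every long enough window of labels. -/
lemma both_letters (n : ℕ) :
    ∃ G : ℕ, 0 < G ∧ ∀ (m' : ℕ) (a : Bool) (o : ℕ), o + G ≤ S.Bk n m' →
      ∀ b : Bool, ∃ j : ℕ, o ≤ j ∧ j < o + G ∧ S.lab n m' a j = b := by
  obtain ⟨G1, hG1pos, hG1⟩ := S.window_not_const n true
  obtain ⟨G2, hG2pos, hG2⟩ := S.window_not_const n false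
  refine ⟨max G1 G2, by omega, ?_⟩
  intro m' a o ho b
  cases b
  · obtain ⟨j, h1, h2, h3⟩ := hG1 m' a o (le_trans (by omega) ho)
    exact ⟨j, h1, by omega, by simpa using h3⟩
  · obtain ⟨j, h1, h2, h3⟩ := hG2 m' a o (le_trans (by omega) ho)
    exact ⟨j, h1, by omega, by simpa using h3⟩

lemma Bk_large (n G : ℕ) : ∃ M : ℕ, n < M ∧ G ≤ S.Bk n M := by
  refine ⟨max (G * S.q n) (n + 1), by omega, ?_⟩
  rw [Bk, Nat.le_div_iff_mul_le (S.qpos n)]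
  calc G * S.q n ≤ max (G * S.q n) (n+1) + 1 := by omega
  _ ≤ S.q (max (G * S.q n) (n + 1)) := S.le_q_self _

lemma primitive : PrimitiveSeq (A := fun _ : ℕ => Bool) S.tau := by
  intro n
  obtain ⟨G, hGpos, hG⟩ := S.both_letters n
  obtain ⟨M, hnM, hGM⟩ := S.Bk_large n G
  refine ⟨M - n, by omega, ?_⟩
  intro a b
  have hsum : n + (M - n) = M := by omega
  rw [S.sadic_eq, hsum]
  obtain ⟨j, _, hjlt, hjval⟩ := hG M a 0 (by omega) b
  rw [W]
  apply List.mem_map.mpr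
  exact ⟨j, List.mem_range.mpr (by omega), hjval⟩

lemma alphabetRank : AlphabetRankLE (fun _ : ℕ => Bool) 2 := by
  intro N
  exact ⟨N, le_refl N, by simp⟩

end StData

end Dev

lemma factorAt_congr_point {A : Type*} {y z : ℤ → A} {i i' : ℤ} {m : ℕ}
    (h : factorAt y i m = factorAt z i' m) (j : ℕ) (hj : j < m) :
    y (i + j) = z (i' + j) := by
  have e1 := getElem_factorAt y i m j hj
  have e2 := getElem_factorAt z i' m j hj
  rw [← e1, ← e2]
  exact List.getElem_of_eq h _

/-- characterization of the orbit closure in terms of factors. -/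
lemma mem_closure_orbit_iff {x y : ℤ → Bool} :
    y ∈ closure (orbit x) ↔
      ∀ (i : ℤ) (m : ℕ), ∃ k : ℤ, factorAt y i m = factorAt x (i + k) m := by
  constructor
  · intro h i m
    set I : Finset ℤ := (Finset.range m).image (fun j : ℕ => ((i + (j:ℤ) : ℤ))) with hI
    set O : Set (ℤ → Bool) := (↑I : Set ℤ).pi (fun p => ({y p} : Set Bool)) with hO
    have hopen : IsOpen O := isOpen_set_pi I.finite_toSet (fun a _ => isOpen_discrete _)
    have hyO : y ∈ O := by
      intro p _
      rfl
    obtain ⟨z, hzO, k, rfl⟩ := mem_closure_iff.mp h O hopen hyO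
    refine ⟨k, ?_⟩
    apply List.ext_getElem (by simp)
    intro j hj hj'
    rw [getElem_factorAt y i m j (by simpa using hj), getElem_factorAt x (i+k) m j (by simpa using hj')]
    have hmem : i + (j:ℤ) ∈ (↑I : Set ℤ) := by
      simp only [hI, Finset.coe_image, Finset.coe_range]
      exact ⟨j, by simpa using (by simpa using hj : j < m), rfl⟩
    have hz : shiftBy k x (i + (j:ℤ)) = y (i + (j:ℤ)) := Set.mem_singleton_iff.mp (hzO _ hmem)
    rw [← hz]
    show x (i + (j:ℤ) + k) = x (i + k + (j:ℤ))
    congr 1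
    ring
  · intro h
    rw [mem_closure_iff]
    intro O hO hyO
    obtain ⟨I, u, hu, hsub⟩ := isOpen_pi_iff.mp hO y hyO
    set Mb : ℕ := I.sup (fun p => p.natAbs) with hMb
    have hbound : ∀ p ∈ I, -(Mb:ℤ) ≤ p ∧ p ≤ Mb := by
      intro p hp
      have h1 := Finset.le_sup (f := fun p : ℤ => p.natAbs) hp
      have h2 := Int.natAbs_eq p
      rcases h2 with h2 | h2 <;> omega
    obtain ⟨k, hk⟩ := h (-(Mb:ℤ)) (2*Mb+1)
    refine ⟨shiftBy k x, hsub ?_, k, rfl⟩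
    intro p hp
    have hpb := hbound p hp
    have hj : ((p + Mb).toNat) < 2*Mb+1 := by omega
    have := factorAt_congr_point hk ((p + Mb).toNat) hj
    have hcast : -(Mb:ℤ) + ((p + Mb).toNat : ℤ) = p := by omega
    rw [hcast] at this
    have hz : shiftBy k x p = y p := by
      show x (p + k) = y p
      rw [this]
      congr 1
      omega
    rw [hz]
    exact (hu p hp).2

namespace StData
variable (S : StData)

/-! ### XLevel equals the subshift -/

lemma factor_in_block (i : ℤ) (m : ℕ) :
    ∃ (n' : ℕ) (a : Bool), 0 < n' ∧ factorAt S.x i m <:+: S.W 0 n' a := by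
  -- find a level M that makes the whole window periodic
  have hM : ∃ M : ℕ, (∀ j : ℕ, j < m → (i + j) ∈ PerSet S.x (S.q M)) ∧ m ≤ S.q M := by
    have hMj : ∀ j : ℕ, ∃ Mj, (i + j) ∈ PerSet S.x (S.q Mj) := fun j => S.cover (i + j)
    choose Mf hMf using hMj
    set M1 := (Finset.range m).sup Mf with hM1
    refine ⟨max M1 m, ?_, ?_⟩
    · intro j hj
      apply perSet_mono (S.qdvd_le ?_) (hMf j)
      calc Mf j ≤ M1 := Finset.le_sup (Finset.mem_range.mpr hj)
      _ ≤ max M1 m := le_max_left _ _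
    · calc m ≤ max M1 m := le_max_right _ _
      _ ≤ max M1 m + 1 := by omega
      _ ≤ S.q (max M1 m) := S.le_q_self _
  obtain ⟨M, hMper, hMm⟩ := hM
  set n' := M + 1 with hn'
  have hqM : (0:ℤ) < S.q M := by exact_mod_cast S.qpos M
  set r := (i - S.t n') % (S.q M : ℤ) with hr
  have hr0 : 0 ≤ r := Int.emod_nonneg _ (by positivity)
  have hrq : r < S.q M := Int.emod_lt_of_pos _ hqM
  have hshift : factorAt S.x i m = factorAt S.x (S.t n' + r) m := by
    apply List.ext_getElem (by simp)
    intro j hj hj'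
    rw [getElem_factorAt _ _ _ _ (by simpa using hj),
      getElem_factorAt _ _ _ _ (by simpa using hj')]
    have hdvd : (S.q M : ℤ) ∣ (S.t n' + r - i) := by
      have h4 := Int.mul_ediv_add_emod (i - S.t n') (S.q M)
      rw [← hr] at h4
      refine ⟨-((i - S.t n')/(S.q M)), ?_⟩
      linarith
    have := perSet_eval (hMper j (by simpa using hj)) hdvd
    rw [show i + (j:ℤ) + (S.t n' + r - i) = S.t n' + r + j by ring] at this
    exact this.symm
  rw [hshift]
  refine ⟨n', S.x (S.t n' + S.s n'), by omega, ?_⟩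
  have hblock : factorAt S.x (S.t n') (S.q n') = S.W 0 n' (S.x (S.t n' + S.s n')) := by
    have := S.block_eq n' 0
    simpa using this
  rw [← hblock]
  have hinf := factorAt_infix S.x (S.t n') r.toNat m (S.q n') ?_
  · have : S.t n' + (r.toNat : ℤ) = S.t n' + r := by
      rw [Int.toNat_of_nonneg hr0]
    rwa [this] at hinf
  · have h5 : 3 * S.q M ≤ S.q n' := S.qratio M
    have h6 : r.toNat < S.q M := by omega
    omega

/-- every hole value occurs: the block with a given filling occurs in `x`. -/
lemma block_occurs (n' : ℕ) (a : Bool) :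
    ∃ pos : ℤ, S.W 0 n' a = factorAt S.x pos (S.q n') := by
  obtain ⟨c, d, hc, hd, hcd⟩ := S.nonc n'
  obtain ⟨cc, hccd, hccv⟩ : ∃ cc : ℤ, ((S.q n' : ℤ) ∣ (cc - S.hh n')) ∧ S.x cc = a := by
    by_cases h1 : S.x c = a
    · exact ⟨c, hc, h1⟩
    · refine ⟨d, hd, ?_⟩
      cases hb : S.x c <;> cases hb' : S.x d <;> cases a <;> simp_all
  obtain ⟨e, he⟩ := hccd
  refine ⟨S.t n' + e * S.q n', ?_⟩
  have := S.block_eq n' e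
  have hpos : S.t n' + e * S.q n' + S.s n' = cc := by
    have : S.hh n' = S.t n' + S.s n' := by rw [t]; ring
    rw [this] at he
    linarith
  rw [hpos, hccv] at this
  exact this.symm

/-- the S-adic subshift of `tau` is the orbit closure of `x`. -/
lemma xlevel_eq : XLevel (A := fun _ : ℕ => Bool) S.tau 0 = closure (orbit S.x) := by
  ext y
  constructor
  · intro hy
    rw [mem_closure_orbit_iff]
    intro i m
    obtain ⟨k, hkpos, a, hinf⟩ := hy i m
    rw [S.sadic_eq, Nat.zero_add] at hinf
    obtain ⟨pos, hpos⟩ := S.block_occurs k a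
    rw [hpos] at hinf
    obtain ⟨dd, hdd⟩ := infix_factorAt hinf
    rw [length_factorAt] at hdd
    refine ⟨pos + dd - i, ?_⟩
    rw [show i + (pos + dd - i) = pos + dd by ring]
    exact hdd
  · intro hy
    intro i m
    obtain ⟨k, hk⟩ := mem_closure_orbit_iff.mp hy i m
    obtain ⟨n', a, hn'pos, hinf⟩ := S.factor_in_block (i + k) m
    refine ⟨n', hn'pos, a, ?_⟩
    rw [S.sadic_eq, Nat.zero_add, hk]
    exact hinf

/-! ### recognizability -/

lemma factorAt_const (b : Bool) (i : ℤ) (m : ℕ) :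
    factorAt (fun _ : ℤ => b) i m = List.replicate m b := by
  rw [factorAt_eq', List.eq_replicate_iff]
  constructor
  · simp
  · intro c hc
    simp only [List.mem_map] at hc
    obtain ⟨j, _, rfl⟩ := hc
    rfl

lemma const_not_mem (n : ℕ) (b : Bool) :
    (fun _ : ℤ => b) ∉ XLevel (A := fun _ : ℕ => Bool) S.tau n := by
  intro hmem
  obtain ⟨G, hGpos, hG⟩ := S.window_not_const n b
  obtain ⟨k, hkpos, a, hinf⟩ := hmem 0 G
  rw [S.sadic_eq] at hinf
  obtain ⟨pre, suf, heq⟩ := hinf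
  set o := pre.length with ho
  have hlength : o + G + suf.length = S.Bk n (n+k) := by
    have := congrArg List.length heq
    simp only [List.length_append, length_factorAt, length_W] at this
    omega
  obtain ⟨j, hj1, hj2, hlab⟩ := hG (n+k) a o (by omega)
  have hjB : j < S.Bk n (n+k) := by omega
  have e1 : (S.W n (n+k) a)[j]'(by simp [hjB]) = S.lab n (n+k) a j := S.getElem_W _ _ _ _ hjB
  have e2 := getElem_of_eq_append heq (j - o)
    (by rw [length_factorAt]; omega)
    (by rw [length_W]; omega)
  rw [getElem_factorAt _ _ _ _ (by omega : j - o < G)] at e2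
  have hoj : pre.length + (j - o) = j := by omega
  simp only [hoj] at e2
  rw [e2] at e1
  rw [hlab] at e1
  simp at e1

lemma lab_form (n : ℕ) (b : Bool) (mi : ℕ) :
    S.lab n (n+1) b mi = if mi = 1 then b else S.x (S.t (n+1) + mi * S.q n + S.s n) := by
  have hq : (0:ℤ) < S.q n := by exact_mod_cast S.qpos n
  rw [lab, S.s_succ]
  by_cases hmi : mi = 1
  · rw [if_pos hmi, if_pos (by rw [hmi]; push_cast; ring)]
  · rw [if_neg hmi, if_neg]
    intro hc
    apply hmi
    have h1 : (mi:ℤ) * S.q n = 1 * S.q n := by linarith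
    have h2 : (mi:ℤ) = 1 := mul_right_cancel₀ (by positivity) h1
    exact_mod_cast h2

lemma rep_spec {n : ℕ} {x' y : ℤ → Bool} {k : ℕ}
    (h : IsCenteredRep (S.tau n) (XLevel (A := fun _ : ℕ => Bool) S.tau (n+1)) x' y k) :
    y ∈ XLevel (A := fun _ : ℕ => Bool) S.tau (n+1) ∧ k < S.Bk n (n+1) ∧
      ∀ (j : ℤ) (mi : ℕ), mi < S.Bk n (n+1) →
        x' (j * S.Bk n (n+1) + mi - k) = S.lab n (n+1) (y j) mi := by
  obtain ⟨hy, hk, c, hc0, hcstep, hcspec⟩ := h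
  set L := S.Bk n (n+1) with hL
  have hlen : ∀ b : Bool, (S.tau n b).length = L := fun b => S.length_sub n b
  rw [hlen] at hk
  have hclin : ∀ j : ℤ, c j = j * L := by
    intro j
    induction j using Int.induction_on with
    | zero => rw [hc0]; ring
    | succ i ih =>
        rw [hcstep, ih, hlen]
        push_cast
        ring
    | pred i ih =>
        have := hcstep (-(i:ℤ) - 1)
        rw [show (-(i:ℤ) - 1 + 1) = -(i:ℤ) by ring, ih, hlen] at this
        have h2 : c (-(i:ℤ) - 1) = -(i:ℤ) * L - L := by linarith
        rw [h2]
        push_cast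
        ring
  refine ⟨hy, hk, ?_⟩
  intro j mi hmi
  have hmi' : mi < (S.tau n (y j)).length := by rw [hlen]; exact hmi
  have := hcspec j ⟨mi, hmi'⟩
  simp only at this
  rw [hclin] at this
  have hget : (S.tau n (y j)).get ⟨mi, hmi'⟩ = S.lab n (n+1) (y j) mi := by
    rw [List.get_eq_getElem]
    exact S.getElem_W n (n+1) (y j) mi hmi
  rw [hget] at this
  rw [← this]

lemma recog : RecognizableSeq (A := fun _ : ℕ => Bool) S.tau := by
  intro n
  intro x' y y' k k' h1 h2
  obtain ⟨hy, hk, hspec⟩ := S.rep_spec h1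
  obtain ⟨hy', hk', hspec'⟩ := S.rep_spec h2
  set L := S.Bk n (n+1) with hL
  have hL3 : 3 ≤ L := S.Bk_ge_three n
  have hLz : (0:ℤ) < L := by exact_mod_cast (by omega : 0 < L)
  have hyj : ∀ j : ℤ, y j = x' (j * L + 1 - k) := by
    intro j
    have := hspec j 1 (by omega)
    rw [S.lab_form, if_pos rfl] at this
    exact this.symm
  have hy'j : ∀ j : ℤ, y' j = x' (j * L + 1 - k') := by
    intro j
    have := hspec' j 1 (by omega)
    rw [S.lab_form, if_pos rfl] at this
    exact this.symm
  by_cases hkk : k = k'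
  · subst hkk
    refine ⟨funext fun j => ?_, rfl⟩
    rw [hyj j, hy'j j]
  · exfalso
    set u := 1 - (k:ℤ) + k' with hu
    set mi' := (u % L).toNat with hmi'
    have hum : 0 ≤ u % L := Int.emod_nonneg _ (by omega)
    have humL : u % L < L := Int.emod_lt_of_pos _ hLz
    have hmicast : (mi' : ℤ) = u % L := Int.toNat_of_nonneg hum
    have hmilt : mi' < L := by omega
    have hmine : mi' ≠ 1 := by
      intro hcon
      have h5 : u % L = 1 := by omega
      have h6 := Int.mul_ediv_add_emod u L
      rw [h5] at h6
      have h7 : (k':ℤ) - k = (L:ℤ) * (u / L) := by omega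
      have h8 : ¬ ((L:ℤ) ∣ ((k':ℤ) - k)) := by
        apply not_dvd_of_small hLz (by omega) (by omega)
        intro hcon2
        apply hkk
        omega
      exact h8 ⟨u / L, h7⟩
    have hconst : ∀ j : ℤ, y j = S.x (S.t (n+1) + mi' * S.q n + S.s n) := by
      intro j
      rw [hyj j]
      set i := j * L + 1 - (k:ℤ) with hi
      have hik : i + k' = u + j * L := by rw [hi, hu]; ring
      have hmod : (i + k') % L = u % L := by
        rw [hik]
        exact Int.add_mul_emod_self_right _ _ _
      have hdm := Int.mul_ediv_add_emod (i + k') L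
      have hieq : i = ((i + k') / L) * L + mi' - k' := by
        rw [hmicast, ← hmod]
        linarith
      have := hspec' ((i + k') / L) mi' hmilt
      rw [S.lab_form, if_neg hmine] at this
      rw [hieq]
      exact this
    have hyconst : y = fun _ => S.x (S.t (n+1) + mi' * S.q n + S.s n) := funext hconst
    exact S.const_not_mem (n+1) _ (hyconst ▸ hy)

end StData


/-- Every aperiodic Toeplitz subshift over `{0,1}` with single holes is
a strong Toeplitz subshift of rank 2. -/
theorem statement16 (X : Set (ℤ → Bool)) (hX : IsToeplitzSubshift X)
    (hap : ∀ x ∈ X, IsAperiodicPoint x) (hsh : HasSingleHoles X) :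
    IsStrongToeplitzOfRank X 2 := by
  classical
  obtain ⟨x, P, ⟨hxT, hXeq⟩, ⟨hmono, hess, hdvdP, hcovP⟩, hholes⟩ := hsh
  -- x belongs to X, hence is aperiodic
  have hxmem : x ∈ X := by
    rw [hXeq]
    exact subset_closure ⟨0, funext fun i => by simp [shiftBy]⟩
  have hapx : ¬ IsPeriodicPoint x := hap x hxmem
  -- basic facts about P
  have Pbig : ∀ n, 1 < P n := fun n => (hess n).1
  have Pdvd_le : ∀ {m n : ℕ}, m ≤ n → P m ∣ P n := by
    intro m n h
    induction n with
    | zero => rw [Nat.le_zero] at h; rw [h]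
    | succ k ih =>
        rcases Nat.lt_or_ge m (k+1) with h'|h'
        · exact dvd_trans (ih (by omega)) (hdvdP k)
        · have : m = k+1 := by omega
          rw [this]
  have Pratio : ∀ n, 2 * P n ≤ P (n+1) := by
    intro n
    obtain ⟨c, hc⟩ := hdvdP n
    have hlt : P n < P (n+1) := hmono (by omega)
    have : 2 ≤ c := by
      by_contra h'
      push_neg at h'
      interval_cases c <;> omega
    calc 2 * P n ≤ P n * c := by nlinarith [Pbig n]
    _ = P (n+1) := hc.symm
  -- the holes
  choose hol hprop huni using hholes
  -- key: non-periodic points lie in the hole class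
  have keyD : ∀ (N : ℕ) (i : ℤ), i ∉ PerSet x (P N) → (P N : ℤ) ∣ (i - hol N) := by
    intro N i hi
    have hPp : (0:ℤ) < P N := by exact_mod_cast (show 0 < P N by have := Pbig N; omega)
    set r := i % (P N : ℤ) with hr
    have hr0 : 0 ≤ r := Int.emod_nonneg _ (by omega)
    have hrP : r < P N := Int.emod_lt_of_pos _ hPp
    have hdvd : (P N : ℤ) ∣ (i - r) := by
      have h4 := Int.mul_ediv_add_emod i (P N)
      refine ⟨i / (P N : ℤ), by linarith⟩
    have hrnot : r ∉ PerSet x (P N) := by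
      intro hrmem
      apply hi
      have := perSet_shift (i - r) hdvd hrmem
      rwa [show r + (i - r) = i by ring] at this
    have : r = hol N := huni N r ⟨hr0, hrP, hrnot⟩
    rw [← this]
    exact hdvd
  -- construct the structure
  set q : ℕ → ℕ := fun n => Nat.casesOn n 1 (fun m => P (2*m+1)) with hq
  set hh : ℕ → ℤ := fun n => Nat.casesOn n 0 (fun m => hol (2*m+1)) with hhh
  have perlem : ∀ n i, ¬((q n : ℤ) ∣ (i - hh n)) → i ∈ PerSet x (q n) := by
    intro n i hnd
    cases n with
    | zero =>
        exfalso
        apply hnd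
        show ((1:ℕ):ℤ) ∣ _
        rw [Nat.cast_one]
        exact one_dvd _
    | succ m =>
        by_contra hcon
        exact hnd (keyD (2*m+1) i hcon)
  have qpos : ∀ n, 0 < q n := by
    intro n
    cases n with
    | zero => exact Nat.one_pos
    | succ m => show 0 < P (2*m+1); have := Pbig (2*m+1); omega
  have noncl : ∀ n, ∃ c d : ℤ, (q n : ℤ) ∣ (c - hh n) ∧ (q n : ℤ) ∣ (d - hh n) ∧ x c ≠ x d := by
    intro n
    by_contra hcon
    push_neg at hcon
    apply hapx
    refine ⟨q n, qpos n, ?_⟩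
    intro i
    by_cases hdv : (q n : ℤ) ∣ (i - hh n)
    · exact hcon (i + q n) i (by
        rw [show i + (q n : ℤ) - hh n = (i - hh n) + q n by ring]
        exact dvd_add hdv ⟨1, by ring⟩) hdv
    · have hper := perlem n i hdv
      have := hper 1
      rwa [one_mul] at this
  set S : StData :=
    { x := x
      q := q
      hh := hh
      q0 := rfl
      qdvd := by
        intro n
        cases n with
        | zero => exact one_dvd _
        | succ m => exact Pdvd_le (by omega)
      qratio := by
        intro n
        cases n with
        | zero =>
            show 3 * 1 ≤ P 1
            have h1 : 2 * P 0 ≤ P 1 := Pratio 0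
            have h2 := Pbig 0
            omega
        | succ m =>
            show 3 * P (2*m+1) ≤ P (2*m+3)
            have h1 : 2 * P (2*m+1) ≤ P (2*m+2) := Pratio (2*m+1)
            have h2 : 2 * P (2*m+2) ≤ P (2*m+3) := Pratio (2*m+2)
            have h3 := Pbig (2*m+1)
            omega
      per := perlem
      hmod := by
        intro n
        cases n with
        | zero =>
            show ((1:ℕ):ℤ) ∣ _
            rw [Nat.cast_one]
            exact one_dvd _
        | succ m =>
            show ((P (2*m+1) : ℕ):ℤ) ∣ (hol (2*m+3) - hol (2*m+1))
            apply keyD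
            intro hmem
            exact (hprop (2*m+3)).2.2 (perSet_mono (Pdvd_le (by omega)) hmem)
      cover := by
        intro i
        obtain ⟨n0, hn0⟩ := hcovP i
        exact ⟨n0 + 1, perSet_mono (Pdvd_le (by omega : n0 ≤ 2*n0+1)) hn0⟩
      nonc := noncl } with hS
  -- assemble
  refine ⟨fun _ => Bool, fun _ => inferInstance, S.tau, S.nonerasing, S.constlen,
    S.primitive, S.proper, S.recog, (fun N => ⟨N, le_refl N, by simp⟩), ?_⟩
  have hXX : X = XLevel (A := fun _ : ℕ => Bool) S.tau 0 := by
    rw [S.xlevel_eq]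
    exact hXeq
  exact ⟨Homeomorph.setCongr hXX, fun z hz hz' => rfl⟩

end ToeplitzFR
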